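/- Fix α > 0, ε > 0, Δ > 0, N ∈ ℕ (N ≥ 1), and w_0 ∈ ℝ. Assume the deterministic sign dynamics u_{n+1} = u_n − α·sign(u_n) started at u_0 = w_0 satisfies |u_n| ≥ ε + Δ for all n ≥ 0. Then for every σ > 0, the noisy sign dynamics (w_n^{(σ)}) started at w_0 satisfies P(T_ε^{(σ)} ≤ N) ≤ 4·N·α²·σ²/Δ², where T_ε^{(σ)} = inf{n ≥ 0 : |w_n^{(σ)}| ≤ ε}. In particular P(T_ε^{(σ)} > N) → 1 as σ → 0. -/

import Mathlib

open MeasureTheory ProbabilityTheory Filter Real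
open scoped ENNReal NNReal

/-- The sign function: `1` if `x > 0`, `-1` if `x < 0`, `0` if `x = 0`. -/
noncomputable def sgn (x : ℝ) : ℝ := if 0 < x then 1 else if x < 0 then -1 else 0

lemma gaussianPDFReal_zero_one (x : ℝ) :
    gaussianPDFReal 0 1 x = (Real.sqrt (2 * π))⁻¹ * Real.exp (-x ^ 2 / 2) := by
  simp [gaussianPDFReal]

lemma integrable_sq_gaussianPDFReal :
    Integrable (fun x : ℝ => x ^ 2 * gaussianPDFReal 0 1 x) := by
  have h : Integrable (fun x : ℝ => x ^ (2 : ℝ) * Real.exp (-(1/2 : ℝ) * x ^ 2)) :=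
    integrable_rpow_mul_exp_neg_mul_sq (by norm_num) (by norm_num)
  have h2 : Integrable (fun x : ℝ => x ^ 2 * Real.exp (-(1/2 : ℝ) * x ^ 2)) := by
    simpa [Real.rpow_natCast] using h
  have := h2.const_mul ((Real.sqrt (2 * π))⁻¹)
  apply Integrable.congr this
  filter_upwards with x
  rw [gaussianPDFReal_zero_one]
  ring_nf

lemma sq_mul_gaussianPDFReal_le (x : ℝ) :
    x ^ 2 * gaussianPDFReal 0 1 x
      ≤ (Real.sqrt (2 * π))⁻¹ * (4 / Real.exp 1) * Real.exp (-(1/4 : ℝ) * x ^ 2) := by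
  have hx : x ^ 2 ≤ (4 / Real.exp 1) * Real.exp (x ^ 2 / 4) := by
    have h := Real.add_one_le_exp (x ^ 2 / 4 - 1)
    rw [Real.exp_sub] at h
    have he : (0:ℝ) < Real.exp 1 := Real.exp_pos 1
    rw [div_mul_eq_mul_div, le_div_iff₀ he]
    have h3 := mul_le_mul_of_nonneg_right h he.le
    rw [div_mul_cancel₀ _ he.ne'] at h3
    nlinarith
  rw [gaussianPDFReal_zero_one]
  have hs : (0:ℝ) < (Real.sqrt (2 * π))⁻¹ := by
    rw [inv_pos]; exact Real.sqrt_pos.2 (by positivity)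
  have key : x ^ 2 * ((Real.sqrt (2*π))⁻¹ * Real.exp (-x^2 / 2))
      ≤ ((4 / Real.exp 1) * Real.exp (x ^ 2 / 4)) * ((Real.sqrt (2*π))⁻¹ * Real.exp (-x^2 / 2)) := by
    apply mul_le_mul_of_nonneg_right hx
    positivity
  calc x ^ 2 * ((Real.sqrt (2*π))⁻¹ * Real.exp (-x^2 / 2))
      ≤ ((4 / Real.exp 1) * Real.exp (x ^ 2 / 4)) * ((Real.sqrt (2*π))⁻¹ * Real.exp (-x^2 / 2)) := key
    _ = (Real.sqrt (2 * π))⁻¹ * (4 / Real.exp 1) * (Real.exp (x^2/4) * Real.exp (-x^2/2)) := by ring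
    _ = (Real.sqrt (2 * π))⁻¹ * (4 / Real.exp 1) * Real.exp (-(1/4:ℝ) * x ^ 2) := by
        rw [← Real.exp_add]; ring_nf

lemma integral_sq_gaussianPDFReal_le :
    ∫ x : ℝ, x ^ 2 * gaussianPDFReal 0 1 x ≤ 4 := by
  have hint2 : Integrable (fun x : ℝ =>
      (Real.sqrt (2 * π))⁻¹ * (4 / Real.exp 1) * Real.exp (-(1/4 : ℝ) * x ^ 2)) :=
    (integrable_exp_neg_mul_sq (by norm_num)).const_mul _
  have hmono := integral_mono integrable_sq_gaussianPDFReal hint2 sq_mul_gaussianPDFReal_le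
  have hval : ∫ x : ℝ, (Real.sqrt (2 * π))⁻¹ * (4 / Real.exp 1) * Real.exp (-(1/4 : ℝ) * x ^ 2)
      = (Real.sqrt (2 * π))⁻¹ * (4 / Real.exp 1) * Real.sqrt (π / (1/4)) := by
    rw [integral_const_mul, integral_gaussian]
  rw [hval] at hmono
  refine hmono.trans ?_
  have hπ : (0:ℝ) < π := Real.pi_pos
  have h1 : Real.sqrt (π / (1/4)) = 2 * Real.sqrt π := by
    rw [show π / (1/4 : ℝ) = 4 * π by ring, show (4:ℝ) * π = 2^2 * π by norm_num,
      Real.sqrt_mul (by positivity), Real.sqrt_sq (by norm_num)]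
  have h2 : Real.sqrt (2 * π) = Real.sqrt 2 * Real.sqrt π := Real.sqrt_mul (by norm_num) _
  rw [h1, h2]
  have hsπ : (0:ℝ) < Real.sqrt π := Real.sqrt_pos.2 hπ
  have hs2 : (0:ℝ) < Real.sqrt 2 := Real.sqrt_pos.2 (by norm_num)
  rw [mul_inv]
  have he : (0:ℝ) < Real.exp 1 := Real.exp_pos 1
  have hsq2 : Real.sqrt 2 * Real.sqrt 2 = 2 := Real.mul_self_sqrt (by norm_num)
  have he2 : (2:ℝ) ≤ Real.exp 1 := by
    have := Real.add_one_le_exp (1:ℝ); linarith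
  have h2le : Real.sqrt 2 ≤ 2 := by
    nlinarith
  -- goal: (√2)⁻¹ * (√π)⁻¹ * (4 / e) * (2 * √π) ≤ 4
  have : (Real.sqrt 2)⁻¹ * (Real.sqrt π)⁻¹ * (4 / Real.exp 1) * (2 * Real.sqrt π)
      = 8 / (Real.sqrt 2 * Real.exp 1) := by
    field_simp
    ring
  rw [this]
  rw [div_le_iff₀ (by positivity)]
  nlinarith

lemma integrable_sq_gaussianReal :
    Integrable (fun x : ℝ => x ^ 2) (gaussianReal 0 1) := by
  rw [gaussianReal_of_var_ne_zero 0 one_ne_zero,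
    integrable_withDensity_iff (measurable_gaussianPDF 0 1)
      (Filter.Eventually.of_forall fun x => ENNReal.ofReal_lt_top)]
  apply integrable_sq_gaussianPDFReal.congr
  filter_upwards with x
  rw [gaussianPDF, ENNReal.toReal_ofReal (gaussianPDFReal_nonneg 0 1 x)]

lemma memLp_two_id_gaussianReal : MemLp (fun x : ℝ => x) 2 (gaussianReal 0 1) := by
  exact (memLp_two_iff_integrable_sq aestronglyMeasurable_id).2 integrable_sq_gaussianReal

lemma integral_id_gaussianReal : ∫ x, x ∂(gaussianReal 0 1) = 0 := by
  have hmap : Measure.map (fun x : ℝ => -1 * x) (gaussianReal 0 1) = gaussianReal 0 1 := by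
    rw [gaussianReal_map_const_mul (-1)]
    congr 1
    · ring
    · ext
      norm_num
  have h := integral_map (μ := gaussianReal 0 1) (φ := fun x : ℝ => -1 * x)
    ((measurable_id.const_mul (-1)).aemeasurable) (f := fun x : ℝ => x)
    aestronglyMeasurable_id
  rw [hmap] at h
  simp only [neg_one_mul] at h
  rw [integral_neg] at h
  linarith

lemma integral_sq_gaussianReal_le : ∫ x, x ^ 2 ∂(gaussianReal 0 1) ≤ 4 := by
  have hd : gaussianReal 0 1
      = MeasureTheory.Measure.withDensity volume
        (fun x => ((Real.toNNReal (gaussianPDFReal 0 1 x) : ℝ≥0) : ℝ≥0∞)) := by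
    rw [gaussianReal_of_var_ne_zero 0 one_ne_zero]; rfl
  rw [hd, integral_withDensity_eq_integral_smul
    (measurable_gaussianPDFReal 0 1).real_toNNReal (fun x => x ^ 2)]
  have : ∀ x : ℝ, (Real.toNNReal (gaussianPDFReal 0 1 x) : ℝ≥0) • (x ^ 2)
      = x ^ 2 * gaussianPDFReal 0 1 x := by
    intro x
    rw [NNReal.smul_def, smul_eq_mul, Real.coe_toNNReal _ (gaussianPDFReal_nonneg 0 1 x), mul_comm]
  simp_rw [this]
  exact integral_sq_gaussianPDFReal_le

lemma kolmogorov_bound {Ω : Type*} [MeasurableSpace Ω] (P : Measure Ω) [IsProbabilityMeasure P]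
    (ξ : ℕ → Ω → ℝ) (hmeas : ∀ n, Measurable (ξ n))
    (hindep : iIndepFun ξ P)
    (hL2 : ∀ n, MemLp (ξ n) 2 P)
    (hmean : ∀ n, ∫ ω, ξ n ω ∂P = 0)
    (hvar : ∀ n, ∫ ω, (ξ n ω) ^ 2 ∂P ≤ 4)
    (N : ℕ) (t : ℝ) (ht : 0 < t) :
    P {ω | ∃ n ≤ N, t ≤ |∑ k ∈ Finset.range n, ξ (k + 1) ω|}
      ≤ ENNReal.ofReal ((N : ℝ) * 4 / t ^ 2) := by
  classical
  set S : ℕ → Ω → ℝ := fun n ω => ∑ k ∈ Finset.range n, ξ (k + 1) ω with hSdef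
  have hSL2 : ∀ n, MemLp (S n) 2 P := fun n =>
    memLp_finset_sum (Finset.range n) (fun k _ => hL2 (k + 1))
  have hSint : ∀ n, Integrable (S n) P := fun n => (hSL2 n).integrable one_le_two
  have hSsqint : ∀ n, Integrable (fun ω => S n ω ^ 2) P := fun n => (hSL2 n).integrable_sq
  have hξsm : ∀ n, StronglyMeasurable (ξ n) := fun n => (hmeas n).stronglyMeasurable
  set ℱ := Filtration.natural ξ hξsm with hℱdef
  have hξF : ∀ j n, j ≤ n → Measurable[ℱ n] (ξ j) := by
    intro j n hjn
    have hle : MeasurableSpace.comap (ξ j) inferInstance ≤ ℱ n :=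
      le_iSup₂ (f := fun k (_ : k ≤ n) => MeasurableSpace.comap (ξ k) inferInstance) j hjn
    exact fun s hs => hle _ ⟨s, hs, rfl⟩
  have hSF : ∀ n, Measurable[ℱ n] (S n) := by
    intro n
    apply Finset.measurable_sum
    intro k hk
    exact hξF (k + 1) n (Finset.mem_range.1 hk)
  -- conditional expectation of the next increment is zero
  have hcond0 : ∀ n, P[ξ (n + 1)|ℱ n] =ᵐ[P] 0 := by
    intro n
    refine (hindep.condExp_natural_ae_eq_of_lt hξsm n.lt_succ_self).trans ?_
    rw [hmean (n + 1)]
    rfl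
  have hcomapS : ∀ n, MeasurableSpace.comap (S n) inferInstance ≤ ℱ n := by
    rintro n s ⟨u, hu, rfl⟩
    exact hSF n hu
  -- independence of S n and ξ (n+1)
  have hindepSξ : ∀ n, IndepFun (S n) (ξ (n + 1)) P := by
    intro n
    have h := hindep.indep_comap_natural_of_lt hξsm n.lt_succ_self
    have h2 : Indep (ℱ n) (MeasurableSpace.comap (ξ (n + 1)) inferInstance) P := h.symm
    exact indep_of_indep_of_le_left h2 (hcomapS n)
  -- the squared partial sums form a submartingale
  have hsub : Submartingale (fun n ω => S n ω ^ 2) ℱ P := by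
    refine submartingale_nat (fun n => ((hSF n).pow_const 2).stronglyMeasurable) hSsqint ?_
    intro i
    have hrec : (fun ω => S (i + 1) ω ^ 2)
        = (fun ω => S i ω ^ 2) + ((fun ω => 2 * S i ω * ξ (i + 1) ω)
          + fun ω => ξ (i + 1) ω ^ 2) := by
      funext ω
      simp only [hSdef, Pi.add_apply, Finset.sum_range_succ]
      ring
    have hmulint : Integrable (fun ω => 2 * S i ω * ξ (i + 1) ω) P := by
      have := ((hindepSξ i).integrable_mul (hSint i)
        ((hL2 (i + 1)).integrable one_le_two)).const_mul 2
      apply this.congr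
      filter_upwards with ω
      simp [mul_assoc]
    have hsqint : Integrable (fun ω => ξ (i + 1) ω ^ 2) P := (hL2 (i + 1)).integrable_sq
    have hc1 : P[fun ω => S i ω ^ 2|ℱ i] = fun ω => S i ω ^ 2 :=
      condExp_of_stronglyMeasurable (ℱ.le i)
        ((hSF i).pow_const 2).stronglyMeasurable (hSsqint i)
    have hc2 : P[fun ω => 2 * S i ω * ξ (i + 1) ω|ℱ i] =ᵐ[P] 0 := by
      have hmul : P[(fun ω => 2 * S i ω) * ξ (i + 1)|ℱ i]
          =ᵐ[P] (fun ω => 2 * S i ω) * P[ξ (i + 1)|ℱ i] := by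
        refine condExp_mul_of_stronglyMeasurable_left (((hSF i).const_mul 2).stronglyMeasurable) ?_
          ((hL2 (i + 1)).integrable one_le_two)
        apply hmulint.congr
        filter_upwards with ω
        rfl
      have : (fun ω => 2 * S i ω * ξ (i + 1) ω) = (fun ω => 2 * S i ω) * ξ (i + 1) := rfl
      rw [this]
      refine hmul.trans ?_
      filter_upwards [hcond0 i] with ω hω
      simp only [Pi.mul_apply, hω, Pi.zero_apply, mul_zero]
    have hc3 : (0 : Ω → ℝ) ≤ᵐ[P] P[fun ω => ξ (i + 1) ω ^ 2|ℱ i] :=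
      condExp_nonneg (Filter.Eventually.of_forall fun ω => sq_nonneg _)
    rw [hrec]
    have hA := condExp_add (μ := P) (m := ℱ i) (hSsqint i) (hmulint.add hsqint)
    have hB := condExp_add (μ := P) (m := ℱ i) hmulint hsqint
    filter_upwards [hA, hB, hc2, hc3] with ω h1 h2 h3 h4
    rw [h1, Pi.add_apply, hc1, h2, Pi.add_apply, h3]
    simpa using h4
  -- integral of the squared sum is at most 4 N
  have hm0 : ∫ ω, S N ω ∂P = 0 := by
    have : ∫ ω, S N ω ∂P = ∑ i ∈ Finset.range N, ∫ ω, ξ (i + 1) ω ∂P :=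
      integral_finset_sum (Finset.range N) (fun i _ => (hL2 (i + 1)).integrable one_le_two)
    rw [this]
    simp [hmean]
  have hSsum : S N = ∑ i ∈ Finset.range N, ξ (i + 1) := by
    funext ω
    rw [Finset.sum_apply]
  have hpair : Set.Pairwise ↑(Finset.range N) (fun i j => IndepFun (ξ (i + 1)) (ξ (j + 1)) P) :=
    fun i _ j _ hij => hindep.indepFun (by omega)
  have hvarsum : variance (S N) P = ∑ i ∈ Finset.range N, variance (ξ (i + 1)) P := by
    rw [hSsum]
    exact IndepFun.variance_sum (fun i _ => hL2 (i + 1)) hpair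
  have hvarle : ∀ k, variance (ξ k) P ≤ 4 := by
    intro k
    rw [variance_eq_sub (hL2 k)]
    have h1 : P[(ξ k) ^ 2] = ∫ ω, ξ k ω ^ 2 ∂P := by
      simp only [Pi.pow_apply]
    rw [h1, hmean k]
    simpa using hvar k
  have hintSN : ∫ ω, S N ω ^ 2 ∂P ≤ (N : ℝ) * 4 := by
    have hv := variance_eq_sub (hSL2 N)
    have h1 : P[(S N) ^ 2] = ∫ ω, S N ω ^ 2 ∂P := by
      simp only [Pi.pow_apply]
    have h2 : P[S N] = ∫ ω, S N ω ∂P := rfl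
    rw [h1, h2, hm0] at hv
    have hsum : ∑ i ∈ Finset.range N, variance (ξ (i + 1)) P ≤ (N : ℝ) * 4 := by
      calc ∑ i ∈ Finset.range N, variance (ξ (i + 1)) P
          ≤ ∑ _i ∈ Finset.range N, (4 : ℝ) := Finset.sum_le_sum fun i _ => hvarle (i + 1)
        _ = (N : ℝ) * 4 := by simp [mul_comm]
    nlinarith [hv, hvarsum, hsum]
  -- Doob's maximal inequality
  have hmax := maximal_ineq hsub (fun n ω => sq_nonneg _) (ε := (t ^ 2).toNNReal) N
  set A := {ω | ((t ^ 2).toNNReal : ℝ)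
      ≤ (Finset.range (N + 1)).sup' Finset.nonempty_range_add_one fun k => S k ω ^ 2} with hAdef
  have hsubset : {ω | ∃ n ≤ N, t ≤ |∑ k ∈ Finset.range n, ξ (k + 1) ω|} ⊆ A := by
    rintro ω ⟨n, hnN, hn⟩
    have h1 : t ^ 2 ≤ S n ω ^ 2 := by
      have := pow_le_pow_left₀ ht.le hn 2
      rwa [sq_abs] at this
    have h2 : S n ω ^ 2
        ≤ (Finset.range (N + 1)).sup' Finset.nonempty_range_add_one fun k => S k ω ^ 2 :=
      Finset.le_sup' (f := fun k => S k ω ^ 2) (Finset.mem_range.2 (Nat.lt_succ_of_le hnN))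
    simp only [hAdef, Set.mem_setOf_eq, Real.coe_toNNReal _ (sq_nonneg t)]
    linarith
  have hAint : ∫ ω in A, S N ω ^ 2 ∂P ≤ (N : ℝ) * 4 := by
    refine le_trans (setIntegral_le_integral (hSsqint N)
      (Filter.Eventually.of_forall fun ω => sq_nonneg _)) hintSN
  have hmax2 : ((t ^ 2).toNNReal : ℝ≥0∞) * P A ≤ ENNReal.ofReal ((N : ℝ) * 4) := by
    refine le_trans ?_ (ENNReal.ofReal_le_ofReal hAint)
    simpa [ENNReal.smul_def, smul_eq_mul] using hmax
  have ht2 : (0 : ℝ) < t ^ 2 := by positivity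
  have hne0 : ((t ^ 2).toNNReal : ℝ≥0∞) ≠ 0 := by
    simp [Real.toNNReal_eq_zero, not_le, ht2, ht.ne']
  have hnetop : ((t ^ 2).toNNReal : ℝ≥0∞) ≠ ⊤ := ENNReal.coe_ne_top
  have hPA : P A ≤ ENNReal.ofReal ((N : ℝ) * 4) / ((t ^ 2).toNNReal : ℝ≥0∞) := by
    rw [ENNReal.le_div_iff_mul_le (Or.inl hne0) (Or.inl hnetop), mul_comm]
    exact hmax2
  refine le_trans (measure_mono hsubset) (hPA.trans ?_)
  have : ((t ^ 2).toNNReal : ℝ≥0∞) = ENNReal.ofReal (t ^ 2) := rfl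
  rw [this, ← ENNReal.ofReal_div_of_pos ht2]

lemma sgn_close {ε Δ a b : ℝ} (hε : 0 < ε) (ha : ε + Δ ≤ |a|) (hd : |b - a| < Δ) :
    sgn b = sgn a ∧ ε < |b| := by
  obtain ⟨hd1, hd2⟩ := abs_lt.1 hd
  rcases le_abs.1 ha with h | h
  · have hb : ε < b := by linarith
    have h0a : 0 < a := by linarith
    have h0b : 0 < b := lt_trans hε hb
    refine ⟨by simp [sgn, h0a, h0b], ?_⟩
    rwa [abs_of_pos h0b]
  · have hb : b < -ε := by linarith
    have h0a : a < 0 := by linarith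
    have h0b : b < 0 := by linarith
    have hna : ¬ (0 < a) := not_lt.2 h0a.le
    have hnb : ¬ (0 < b) := not_lt.2 h0b.le
    refine ⟨by simp [sgn, hna, hnb, h0a, h0b], ?_⟩
    rw [abs_of_neg h0b]
    linarith

lemma measurable_sgn : Measurable sgn := by
  unfold sgn
  exact Measurable.ite (measurableSet_lt measurable_const measurable_id) measurable_const
    (Measurable.ite (measurableSet_lt measurable_id measurable_const) measurable_const
      measurable_const)

/-- Small-noise regime: if the deterministic sign dynamics `u` started at `w0` keeps
margin `|u n| ≥ ε + Δ` for all `n`, then for every noise level `σ > 0`, the noisy sign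
dynamics `w σ` started at `w0` (driven by i.i.d. standard Gaussians) satisfies
`P(T_ε ≤ N) ≤ 4 N α² σ² / Δ²`; in particular `P(T_ε > N) → 1` as `σ → 0⁺`. -/
theorem noisy_sign_dynamics_small_noise
    {Ω : Type*} [MeasurableSpace Ω] (P : Measure Ω) [IsProbabilityMeasure P]
    (α ε Δ : ℝ) (hα : 0 < α) (hε : 0 < ε) (hΔ : 0 < Δ)
    (N : ℕ) (hN : 1 ≤ N) (w0 : ℝ)
    (ξ : ℕ → Ω → ℝ) (hξmeas : ∀ n, Measurable (ξ n))
    (hξdist : ∀ n, Measure.map (ξ n) P = gaussianReal 0 1)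
    (hξindep : iIndepFun ξ P)
    (u : ℕ → ℝ) (hu0 : u 0 = w0)
    (hu : ∀ n, u (n + 1) = u n - α * sgn (u n))
    (humargin : ∀ n, ε + Δ ≤ |u n|)
    (w : ℝ → ℕ → Ω → ℝ)
    (hw0 : ∀ σ ω, w σ 0 ω = w0)
    (hw : ∀ σ n ω, w σ (n + 1) ω = w σ n ω - α * (sgn (w σ n ω) + σ * ξ (n + 1) ω)) :
    (∀ σ : ℝ, 0 < σ →
      P {ω | ∃ n ≤ N, |w σ n ω| ≤ ε}
        ≤ ENNReal.ofReal (4 * N * α ^ 2 * σ ^ 2 / Δ ^ 2)) ∧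
    Tendsto (fun σ : ℝ => P {ω | ∀ n ≤ N, ε < |w σ n ω|})
      (nhdsWithin 0 (Set.Ioi 0)) (nhds 1) := by
  -- moments of the noise
  have hL2 : ∀ n, MemLp (ξ n) 2 P := by
    intro n
    have h := memLp_two_id_gaussianReal
    rw [← hξdist n] at h
    exact (memLp_map_measure_iff aestronglyMeasurable_id (hξmeas n).aemeasurable).1 h
  have hmean : ∀ n, ∫ ω, ξ n ω ∂P = 0 := by
    intro n
    have h : ∫ x, x ∂(Measure.map (ξ n) P) = ∫ ω, ξ n ω ∂P :=
      integral_map (hξmeas n).aemeasurable aestronglyMeasurable_id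
    rw [hξdist n] at h
    rw [← h]
    exact _root_.integral_id_gaussianReal
  have hvar : ∀ n, ∫ ω, ξ n ω ^ 2 ∂P ≤ 4 := by
    intro n
    have h : ∫ x, x ^ 2 ∂(Measure.map (ξ n) P) = ∫ ω, ξ n ω ^ 2 ∂P :=
      integral_map (hξmeas n).aemeasurable
        (measurable_id.pow_const 2).aestronglyMeasurable
    rw [hξdist n] at h
    rw [← h]
    exact integral_sq_gaussianReal_le
  -- measurability of the noisy dynamics
  have hwmeas : ∀ σ n, Measurable (w σ n) := by
    intro σ n
    induction n with
    | zero =>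
        have h : w σ 0 = fun _ => w0 := funext (hw0 σ)
        rw [h]; exact measurable_const
    | succ n ih =>
        have h : w σ (n + 1) = fun ω => w σ n ω - α * (sgn (w σ n ω) + σ * ξ (n + 1) ω) :=
          funext (hw σ n)
        rw [h]
        exact ih.sub (measurable_const.mul ((measurable_sgn.comp ih).add
          (measurable_const.mul (hξmeas (n + 1)))))
  -- part 1
  have part1 : ∀ σ : ℝ, 0 < σ →
      P {ω | ∃ n ≤ N, |w σ n ω| ≤ ε}
        ≤ ENNReal.ofReal (4 * N * α ^ 2 * σ ^ 2 / Δ ^ 2) := by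
    intro σ hσ
    set t : ℝ := Δ / (α * σ) with htdef
    have hασ : 0 < α * σ := mul_pos hα hσ
    have ht : 0 < t := div_pos hΔ hασ
    have hαt : α * σ * t = Δ := by rw [htdef]; field_simp
    have hcouple : ∀ ω, (∀ n ≤ N, |∑ k ∈ Finset.range n, ξ (k + 1) ω| < t) →
        ∀ n ≤ N, ε < |w σ n ω| := by
      intro ω hsmall
      have key : ∀ n, n ≤ N →
          w σ n ω - u n = -(α * σ) * ∑ k ∈ Finset.range n, ξ (k + 1) ω ∧ ε < |w σ n ω| := by
        intro n
        induction n with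
        | zero =>
            intro _
            constructor
            · rw [hw0 σ ω, hu0]
              simp
            · rw [hw0 σ ω, ← hu0]
              have := humargin 0
              linarith
        | succ n ih =>
            intro hn1
            have hn : n ≤ N := Nat.le_of_succ_le hn1
            obtain ⟨hd, _⟩ := ih hn
            have habs : |w σ n ω - u n| < Δ := by
              rw [hd, abs_mul, abs_neg, abs_of_pos hασ]
              calc α * σ * |∑ k ∈ Finset.range n, ξ (k + 1) ω|
                  < α * σ * t := by exact mul_lt_mul_of_pos_left (hsmall n hn) hασ
                _ = Δ := hαt
            obtain ⟨hsgn, _⟩ := sgn_close hε (humargin n) habs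
            have hd' : w σ (n + 1) ω - u (n + 1)
                = -(α * σ) * ∑ k ∈ Finset.range (n + 1), ξ (k + 1) ω := by
              rw [hw σ n ω, hu n, hsgn, Finset.sum_range_succ]
              linear_combination hd
            have habs' : |w σ (n + 1) ω - u (n + 1)| < Δ := by
              rw [hd', abs_mul, abs_neg, abs_of_pos hασ]
              calc α * σ * |∑ k ∈ Finset.range (n + 1), ξ (k + 1) ω|
                  < α * σ * t := by exact mul_lt_mul_of_pos_left (hsmall (n + 1) hn1) hασ
                _ = Δ := hαt
            exact ⟨hd', (sgn_close hε (humargin (n + 1)) habs').2⟩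
      intro n hn
      exact (key n hn).2
    have hincl : {ω | ∃ n ≤ N, |w σ n ω| ≤ ε}
        ⊆ {ω | ∃ n ≤ N, t ≤ |∑ k ∈ Finset.range n, ξ (k + 1) ω|} := by
      intro ω hω
      by_contra hcon
      simp only [Set.mem_setOf_eq] at hcon
      push_neg at hcon
      obtain ⟨n, hn, hle⟩ := hω
      exact absurd hle (not_le.2 (hcouple ω hcon n hn))
    refine le_trans (measure_mono hincl) ?_
    refine le_trans (kolmogorov_bound P ξ hξmeas hξindep hL2 hmean hvar N t ht) ?_
    apply le_of_eq
    congr 1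
    rw [htdef]
    field_simp
  refine ⟨part1, ?_⟩
  -- part 2
  have hAmeas : ∀ σ : ℝ, MeasurableSet {ω | ∃ n ≤ N, |w σ n ω| ≤ ε} := by
    intro σ
    have h : {ω | ∃ n ≤ N, |w σ n ω| ≤ ε}
        = ⋃ n, ⋃ _h : n ≤ N, {ω | |w σ n ω| ≤ ε} := by
      ext ω; simp
    rw [h]
    exact MeasurableSet.iUnion fun n => MeasurableSet.iUnion fun _ =>
      (hwmeas σ n).abs measurableSet_Iic
  have hPcompl : ∀ σ : ℝ, P {ω | ∀ n ≤ N, ε < |w σ n ω|}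
      = 1 - P {ω | ∃ n ≤ N, |w σ n ω| ≤ ε} := by
    intro σ
    have h : {ω | ∀ n ≤ N, ε < |w σ n ω|} = {ω | ∃ n ≤ N, |w σ n ω| ≤ ε}ᶜ := by
      ext ω
      simp [not_le]
    rw [h, prob_compl_eq_one_sub (hAmeas σ)]
  have hfun : (fun σ : ℝ => P {ω | ∀ n ≤ N, ε < |w σ n ω|})
      = fun σ : ℝ => 1 - P {ω | ∃ n ≤ N, |w σ n ω| ≤ ε} := funext hPcompl
  rw [hfun]
  have hlim : Tendsto (fun σ : ℝ => 1 - ENNReal.ofReal (4 * N * α ^ 2 * σ ^ 2 / Δ ^ 2))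
      (nhdsWithin 0 (Set.Ioi 0)) (nhds 1) := by
    have h1 : Tendsto (fun σ : ℝ => 4 * (N : ℝ) * α ^ 2 * σ ^ 2 / Δ ^ 2)
        (nhdsWithin 0 (Set.Ioi 0)) (nhds 0) := by
      have hc : Continuous fun σ : ℝ => 4 * (N : ℝ) * α ^ 2 * σ ^ 2 / Δ ^ 2 := by
        fun_prop
      have h0 : (4 * (N : ℝ) * α ^ 2 * (0:ℝ) ^ 2 / Δ ^ 2) = 0 := by ring
      have := (hc.tendsto 0).mono_left (nhdsWithin_le_nhds (s := Set.Ioi (0:ℝ)))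
      rwa [h0] at this
    have h2 := ENNReal.tendsto_ofReal h1
    rw [ENNReal.ofReal_zero] at h2
    have h3 := ENNReal.Tendsto.sub (tendsto_const_nhds (x := (1:ℝ≥0∞))) h2
      (Or.inl ENNReal.one_ne_top)
    simpa using h3
  refine tendsto_of_tendsto_of_tendsto_of_le_of_le' hlim tendsto_const_nhds ?_ ?_
  · filter_upwards [self_mem_nhdsWithin] with σ hσ
    exact tsub_le_tsub_left (part1 σ hσ) 1
  · filter_upwards with σ
    exact tsub_le_self
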